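/- arXiv:2109.02037 — 2 statements merged into one kernel-verified Lean document; each statement's English description precedes it below -/
import Mathlib

section
/- Let R be a commutative ring, I an ideal, and a ∈ R with a ∉ I. If both the ideal (I, a) generated by I and a, and the ideal quotient (I : a) = {r ∈ R : ra ∈ I}, are principal ideals, then I is principal. -/
theorem stmt_7 {R : Type*} [CommRing R] (I : Ideal R) (a : R) (ha : a ∉ I)
    (h1 : ∃ b : R, I ⊔ Ideal.span {a} = Ideal.span {b})
    (h2 : ∃ c : R, ∀ r : R, r ∈ Ideal.span {c} ↔ r * a ∈ I) :
    ∃ d : R, I = Ideal.span {d} := by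
  obtain ⟨b, hb⟩ := h1
  obtain ⟨c, hc⟩ := h2
  -- b = i0 + t*a with i0 ∈ I
  have hbmem : b ∈ I ⊔ Ideal.span {a} := hb ▸ Ideal.mem_span_singleton_self b
  obtain ⟨i0, hi0, z, hz, hsum⟩ := Submodule.mem_sup.mp hbmem
  obtain ⟨t, ht⟩ := Ideal.mem_span_singleton'.mp hz
  -- a = u * b
  have hamem : a ∈ Ideal.span {b} := by
    rw [← hb]; exact Submodule.mem_sup_right (Ideal.mem_span_singleton_self a)
  obtain ⟨u, hu⟩ := Ideal.mem_span_singleton'.mp hamem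
  have hIb : I ≤ Ideal.span {b} := by
    rw [← hb]; exact le_sup_left
  refine ⟨c * b, le_antisymm ?_ ?_⟩
  · intro x hx
    obtain ⟨r, hr⟩ := Ideal.mem_span_singleton'.mp (hIb hx)
    have hra : r * a ∈ I := by
      have : r * a = u * x := by rw [← hu, ← hr]; ring
      rw [this]; exact I.mul_mem_left u hx
    obtain ⟨s, hs⟩ := Ideal.mem_span_singleton'.mp ((hc r).mpr hra)
    exact Ideal.mem_span_singleton'.mpr ⟨s, by rw [← hr, ← hs]; ring⟩
  · rw [Ideal.span_le, Set.singleton_subset_iff]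
    have hca : c * a ∈ I := (hc c).mp (Ideal.mem_span_singleton_self c)
    have : c * b = c * i0 + t * (c * a) := by rw [← hsum, ← ht]; ring
    rw [this]
    exact I.add_mem (I.mul_mem_left c hi0) (I.mul_mem_left t hca)
end

section
/- Every principal ideal domain admits a Dedekind–Hasse norm. -/
open UniqueFactorizationMonoid

theorem stmt_11 {R : Type*} [CommRing R] [IsDomain R] [IsPrincipalIdealRing R] :
    ∃ f : R → ℕ,
      (∀ r : R, f r = 0 ↔ r = 0) ∧
      (∀ a b : R, a ≠ 0 → b ≠ 0 →
        b ∣ a ∨ ∃ x y : R, 0 < f (a * x + b * y) ∧ f (a * x + b * y) < f b) ∧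
      (∀ a b : R, a ≠ 0 → b ≠ 0 → f a ≤ f (a * b)) := by
  classical
  refine ⟨fun r => if r = 0 then 0 else Multiset.card (factors r) + 1, ?_, ?_, ?_⟩
  · intro r
    by_cases h : r = 0 <;> simp [h]
  · intro a b ha hb
    by_cases hdvd : b ∣ a
    · exact Or.inl hdvd
    · refine Or.inr ?_
      set I : Ideal R := Ideal.span {a, b} with hI
      obtain ⟨d, hd⟩ := (IsPrincipalIdealRing.principal I).principal
      have hdI : d ∈ I := hd ▸ Ideal.mem_span_singleton_self d
      obtain ⟨x, y, hxy⟩ := Ideal.mem_span_pair.mp hdI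
      have hda : d ∣ a := by
        rw [← Ideal.mem_span_singleton, ← Ideal.submodule_span_eq, ← hd]
        exact Ideal.subset_span (by simp)
      have hdb : d ∣ b := by
        rw [← Ideal.mem_span_singleton, ← Ideal.submodule_span_eq, ← hd]
        exact Ideal.subset_span (by simp)
      have hd0 : d ≠ 0 := fun h => hb (by simpa [h] using hdb)
      obtain ⟨c, hc⟩ := hdb
      have hc0 : c ≠ 0 := fun h => hb (by simp [hc, h])
      have hcu : ¬IsUnit c := by
        intro hu
        obtain ⟨u, hu'⟩ := hu
        have hbd : b ∣ d := ⟨(u⁻¹ : Rˣ), by rw [hc, ← hu', mul_assoc, Units.mul_inv, mul_one]⟩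
        exact hdvd (hbd.trans hda)
      refine ⟨x, y, ?_, ?_⟩
      · rw [mul_comm a x, mul_comm b y, hxy]
        simp [hd0]
      · rw [mul_comm a x, mul_comm b y, hxy]
        have hcard : Multiset.card (factors b) =
            Multiset.card (factors d) + Multiset.card (factors c) := by
          rw [hc]
          have := Multiset.card_eq_card_of_rel (factors_mul hd0 hc0)
          simpa [Multiset.card_add] using this
        have hcpos : 0 < Multiset.card (factors c) := by
          rw [Multiset.card_pos]
          exact ((factors_pos hc0).mpr hcu).ne'
        simp only [hd0, hb, if_neg, if_false]
        omega
  · intro a b ha hb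
    have hcard : Multiset.card (factors (a * b)) =
        Multiset.card (factors a) + Multiset.card (factors b) :=
      by simpa [Multiset.card_add] using Multiset.card_eq_card_of_rel (factors_mul ha hb)
    simp [ha, hb, mul_ne_zero ha hb, hcard]
end
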